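/- Let q ≥ 2 be an integer. The inverse function h̄_q⁻¹ : [0, log q] → [1/q, 1] of h̄_q is decreasing and concave: for all h₁, h₂ ∈ [0, log q], if h₁ ≤ h₂ then h̄_q⁻¹(h₁) ≥ h̄_q⁻¹(h₂), and for all t ∈ [0, 1], h̄_q⁻¹(t * h₁ + (1 - t) * h₂) ≥ t * h̄_q⁻¹(h₁) + (1 - t) * h̄_q⁻¹(h₂). -/

import Mathlib

/-- `h̄_q(a) = -a log a - (1-a) log((1-a)/(q-1))`, natural log, with the
convention `0 · log 0 = 0` (Mathlib's `Real.log 0 = 0` realizes it). -/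
noncomputable def hbar (q : ℕ) (a : ℝ) : ℝ :=
  -a * Real.log a - (1 - a) * Real.log ((1 - a) / ((q : ℝ) - 1))

/-- `h̄_q⁻¹ : [0, log q] → [1/q, 1]`, the inverse of the strictly decreasing
bijection `h̄_q : [1/q, 1] → [0, log q]`. -/
noncomputable def hbarInv (q : ℕ) (h : ℝ) : ℝ :=
  Function.invFunOn (hbar q) (Set.Icc (1 / (q : ℝ)) 1) h

lemma hbar_eq_qary (q : ℕ) (hq : 2 ≤ q) (a : ℝ) :
    hbar q a = Real.qaryEntropy q (1 - a) := by
  have hq1 : ((q : ℝ) - 1) ≠ 0 := by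
    have : (2 : ℝ) ≤ (q : ℝ) := by exact_mod_cast hq
    linarith
  rcases eq_or_ne a 1 with rfl | ha
  · simp [hbar, Real.qaryEntropy]
  · have h1a : (1 : ℝ) - a ≠ 0 := sub_ne_zero.2 (Ne.symm ha)
    rw [hbar, Real.log_div h1a hq1, Real.qaryEntropy, Real.binEntropy,
      Real.log_inv, Real.log_inv]
    push_cast
    ring

lemma hbar_strictAntiOn (q : ℕ) (hq : 2 ≤ q) :
    StrictAntiOn (hbar q) (Set.Icc (1 / (q : ℝ)) 1) := by
  intro x hx y hy hxy
  rw [hbar_eq_qary q hq, hbar_eq_qary q hq]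
  have hq0 : (0 : ℝ) < q := by positivity
  apply Real.qaryEntropy_strictMonoOn hq
  · exact ⟨by linarith [hy.2], by linarith [hy.1]⟩
  · exact ⟨by linarith [hx.2], by linarith [hx.1]⟩
  · linarith

lemma hbar_one (q : ℕ) : hbar q 1 = 0 := by simp [hbar]

lemma hbar_inv_q (q : ℕ) (hq : 2 ≤ q) : hbar q (1 / (q : ℝ)) = Real.log q := by
  have hq0 : (0 : ℝ) < q := by positivity
  have hq1 : ((q : ℝ) - 1) ≠ 0 := by
    have : (2 : ℝ) ≤ (q : ℝ) := by exact_mod_cast hq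
    linarith
  have key : ((1 : ℝ) - 1 / q) / ((q : ℝ) - 1) = 1 / q := by
    field_simp
  rw [hbar, key]
  have : Real.log (1 / (q : ℝ)) = -Real.log q := by
    rw [one_div, Real.log_inv]
  rw [this]; ring

lemma hbar_continuous (q : ℕ) (hq : 2 ≤ q) : Continuous (hbar q) := by
  have : hbar q = fun a => Real.qaryEntropy q (1 - a) := by
    funext a; exact hbar_eq_qary q hq a
  rw [this]
  exact Real.qaryEntropy_continuous.comp (continuous_const.sub continuous_id)

lemma hbar_surj (q : ℕ) (hq : 2 ≤ q) :
    Set.Icc (0 : ℝ) (Real.log q) ⊆ hbar q '' Set.Icc (1 / (q : ℝ)) 1 := by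
  have hle : (1 : ℝ) / q ≤ 1 := by
    rw [div_le_one (by positivity)]
    exact_mod_cast Nat.one_le_of_lt hq
  have := intermediate_value_Icc' hle ((hbar_continuous q hq).continuousOn)
  rwa [hbar_one, hbar_inv_q q hq] at this

lemma hbarInv_spec (q : ℕ) (hq : 2 ≤ q) {h : ℝ} (hh : h ∈ Set.Icc (0 : ℝ) (Real.log q)) :
    hbarInv q h ∈ Set.Icc (1 / (q : ℝ)) 1 ∧ hbar q (hbarInv q h) = h := by
  obtain ⟨a, ha, hfa⟩ := hbar_surj q hq hh
  have hex : ∃ a ∈ Set.Icc (1 / (q : ℝ)) 1, hbar q a = h := ⟨a, ha, hfa⟩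
  exact ⟨Function.invFunOn_mem hex, Function.invFunOn_eq hex⟩

lemma hbarInv_anti (q : ℕ) (hq : 2 ≤ q) {u v : ℝ}
    (hu : u ∈ Set.Icc (0 : ℝ) (Real.log q)) (hv : v ∈ Set.Icc (0 : ℝ) (Real.log q))
    (huv : u ≤ v) : hbarInv q v ≤ hbarInv q u := by
  obtain ⟨hxu, hfu⟩ := hbarInv_spec q hq hu
  obtain ⟨hxv, hfv⟩ := hbarInv_spec q hq hv
  by_contra hlt
  push_neg at hlt
  have := hbar_strictAntiOn q hq hxu hxv hlt
  rw [hfu, hfv] at this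
  linarith

lemma hbar_concaveOn (q : ℕ) (hq : 2 ≤ q) :
    ConcaveOn ℝ (Set.Icc (1 / (q : ℝ)) 1) (hbar q) := by
  have hcc : ConcaveOn ℝ (Set.Icc (0 : ℝ) 1) (Real.qaryEntropy q) :=
    Real.strictConcaveOn_qaryEntropy.concaveOn
  constructor
  · exact convex_Icc _ _
  · intro x hx y hy s t hs ht hst
    have hq0 : (0 : ℝ) < q := by positivity
    have h0 : (0:ℝ) < 1 / q := by positivity
    have hx' : (1 : ℝ) - x ∈ Set.Icc (0 : ℝ) 1 :=
      ⟨by linarith [hx.2], by linarith [hx.1]⟩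
    have hy' : (1 : ℝ) - y ∈ Set.Icc (0 : ℝ) 1 :=
      ⟨by linarith [hy.2], by linarith [hy.1]⟩
    have := hcc.2 hx' hy' hs ht hst
    rw [hbar_eq_qary q hq, hbar_eq_qary q hq, hbar_eq_qary q hq]
    have heq : 1 - (s • x + t • y) = s • (1 - x) + t • (1 - y) := by
      simp only [smul_eq_mul]; linarith [hst]
    rw [heq]
    exact this

/-- For every integer `q ≥ 2`, the inverse `h̄_q⁻¹` is decreasing
and concave on `[0, log q]`. -/
theorem stmt_8 (q : ℕ) (hq : 2 ≤ q) :
    ∀ h₁ ∈ Set.Icc (0 : ℝ) (Real.log q), ∀ h₂ ∈ Set.Icc (0 : ℝ) (Real.log q),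
      (h₁ ≤ h₂ → hbarInv q h₂ ≤ hbarInv q h₁) ∧
      ∀ t ∈ Set.Icc (0 : ℝ) 1,
        t * hbarInv q h₁ + (1 - t) * hbarInv q h₂ ≤
          hbarInv q (t * h₁ + (1 - t) * h₂) := by
  intro h₁ hh₁ h₂ hh₂
  refine ⟨hbarInv_anti q hq hh₁ hh₂, ?_⟩
  intro t ht
  obtain ⟨hx₁, hf₁⟩ := hbarInv_spec q hq hh₁
  obtain ⟨hx₂, hf₂⟩ := hbarInv_spec q hq hh₂
  set x₁ := hbarInv q h₁
  set x₂ := hbarInv q h₂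
  have ht0 := ht.1; have ht1 := ht.2
  have hxmem : t * x₁ + (1 - t) * x₂ ∈ Set.Icc (1 / (q : ℝ)) 1 :=
    (convex_Icc _ _) hx₁ hx₂ ht0 (by linarith) (by ring)
  -- concavity of hbar
  have hconc : t * h₁ + (1 - t) * h₂ ≤ hbar q (t * x₁ + (1 - t) * x₂) := by
    have := (hbar_concaveOn q hq).2 hx₁ hx₂ ht0 (by linarith : (0:ℝ) ≤ 1 - t) (by ring)
    simp only [smul_eq_mul] at this
    rw [hf₁, hf₂] at this
    exact this
  -- hbar of combination is in [0, log q]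
  have hrange : hbar q (t * x₁ + (1 - t) * x₂) ∈ Set.Icc (0 : ℝ) (Real.log q) := by
    constructor
    · rcases eq_or_lt_of_le hxmem.2 with heq | hlt
      · rw [heq, hbar_one]
      · have := hbar_strictAntiOn q hq hxmem (Set.right_mem_Icc.2
          (by rw [div_le_one (by positivity)]; exact_mod_cast Nat.one_le_of_lt hq)) hlt
        rw [hbar_one] at this; linarith
    · rcases eq_or_lt_of_le hxmem.1 with heq | hlt
      · rw [← heq, hbar_inv_q q hq]
      · have := hbar_strictAntiOn q hq (Set.left_mem_Icc.2
          (by rw [div_le_one (by positivity)]; exact_mod_cast Nat.one_le_of_lt hq)) hxmem hlt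
        rw [hbar_inv_q q hq] at this; linarith
  have hcombmem : t * h₁ + (1 - t) * h₂ ∈ Set.Icc (0 : ℝ) (Real.log q) :=
    (convex_Icc _ _) hh₁ hh₂ ht0 (by linarith) (by ring)
  have hanti := hbarInv_anti q hq hcombmem hrange hconc
  have hleft : hbarInv q (hbar q (t * x₁ + (1 - t) * x₂)) = t * x₁ + (1 - t) * x₂ :=
    ((hbar_strictAntiOn q hq).injOn).leftInvOn_invFunOn hxmem
  rw [hleft] at hanti
  exact hanti
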